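/- The 2-D vorticity transport bound: let Ω ⊂ ℝ² be a bounded simply connected domain, and suppose the solution v of the 2-D Euler equations with f = 0 and divergence-free, tangential initial data v₀ has vorticity ζ(t,x) = ζ₀(U(0,t,x)), where U(0,t,·) : Ω̄ → Ω̄ is a surjective measure-preserving map satisfying |U(0,t,x) − U(0,t,y)| ≤ K|x−y|^δ with δ = e^{−c₁Bt}, B = ‖ζ₀‖_∞. If ζ₀ has finite pointwise Dini seminorm ⟨ζ₀⟩_* = sup_x ∫₀^ρ ω_{ζ₀}(x;r)/r dr < ∞, then for all t ∈ [0,T], ⟨ζ(t)⟩_* ≤ (1/δ)·⟨ζ₀⟩_{*,Kρ^δ} and ‖ζ(t)‖_∞ = ‖ζ₀‖_∞; hence ‖|ζ(t)‖|_* ≤ C_T·‖|ζ₀‖|_* for a constant C_T depending on T, K, c₁, B, ρ. -/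

import Mathlib

open MeasureTheory Set
open scoped ENNReal

noncomputable section

/-- Pointwise modulus of continuity `ω_g(x; r)` relative to a set `s ⊆ ℝ²`. -/
def modulusPtOn (s : Set (EuclideanSpace ℝ (Fin 2)))
    (g : EuclideanSpace ℝ (Fin 2) → ℝ) (x : EuclideanSpace ℝ (Fin 2)) (r : ℝ) : ℝ :=
  sSup {d | ∃ y ∈ s, dist x y ≤ r ∧ d = |g x - g y|}

/-- Pointwise Dini seminorm `⟨g⟩_{*,σ} = sup_x ∫₀^σ ω_g(x;r)/r dr`. -/
def diniSeminormPt (s : Set (EuclideanSpace ℝ (Fin 2)))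
    (g : EuclideanSpace ℝ (Fin 2) → ℝ) (σ : ℝ) : ℝ≥0∞ :=
  ⨆ x : s, ∫⁻ r in Ioc (0 : ℝ) σ, ENNReal.ofReal (modulusPtOn s g x r / r)

/-- Sup norm on `s`. -/
def supNormOn (s : Set (EuclideanSpace ℝ (Fin 2)))
    (g : EuclideanSpace ℝ (Fin 2) → ℝ) : ℝ :=
  sSup {d | ∃ x ∈ s, d = |g x|}

section AuxEuler

variable {s : Set (EuclideanSpace ℝ (Fin 2))} {g : EuclideanSpace ℝ (Fin 2) → ℝ} {M : ℝ}
  {x : EuclideanSpace ℝ (Fin 2)} {r : ℝ}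

lemma modSet_bddAbove (hM : ∀ z ∈ s, |g z| ≤ M) (hx : x ∈ s) (r : ℝ) :
    BddAbove {d | ∃ y ∈ s, dist x y ≤ r ∧ d = |g x - g y|} := by
  refine ⟨2 * M, ?_⟩
  rintro d ⟨y, hy, -, rfl⟩
  calc |g x - g y| ≤ |g x| + |g y| := abs_sub _ _
    _ ≤ M + M := add_le_add (hM x hx) (hM y hy)
    _ = 2 * M := (two_mul M).symm

lemma modulusPtOn_nonneg (hM : ∀ z ∈ s, |g z| ≤ M) (hx : x ∈ s) (hr : 0 ≤ r) :
    0 ≤ modulusPtOn s g x r :=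
  le_csSup (modSet_bddAbove hM hx r) ⟨x, hx, by simpa using hr, by simp⟩

lemma modulusPtOn_le (hM : ∀ z ∈ s, |g z| ≤ M) (hx : x ∈ s) (hM0 : 0 ≤ M) (r : ℝ) :
    modulusPtOn s g x r ≤ 2 * M := by
  refine Real.sSup_le ?_ (by linarith)
  rintro d ⟨y, hy, -, rfl⟩
  calc |g x - g y| ≤ |g x| + |g y| := abs_sub _ _
    _ ≤ M + M := add_le_add (hM x hx) (hM y hy)
    _ = 2 * M := (two_mul M).symm

lemma cov_aux (φ : ℝ → ℝ) {K δ ρ : ℝ} (hK : 0 < K) (hδ0 : 0 < δ) :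
    ∫⁻ r in Ioc (0:ℝ) ρ, ENNReal.ofReal (φ (K * r ^ δ) / r) ≤
      ENNReal.ofReal (1/δ) * ∫⁻ u in Ioc (0:ℝ) (K * ρ ^ δ), ENNReal.ofReal (φ u / u) := by
  have hmeas : MeasurableSet (Ioc (0:ℝ) ρ) := measurableSet_Ioc
  have hderiv : ∀ r ∈ Ioc (0:ℝ) ρ, HasDerivWithinAt (fun r : ℝ => K * r ^ δ)
      (K * (δ * r ^ (δ - 1))) (Ioc (0:ℝ) ρ) r := fun r hr =>
    ((Real.hasDerivAt_rpow_const (Or.inl (ne_of_gt hr.1))).const_mul K).hasDerivWithinAt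
  have hsm : StrictMonoOn (fun r : ℝ => K * r ^ δ) (Ioc (0:ℝ) ρ) := fun a ha b hb hab =>
    mul_lt_mul_of_pos_left (Real.rpow_lt_rpow ha.1.le hab hδ0) hK
  have hinj := hsm.injOn
  have key : ∫⁻ u in (fun r : ℝ => K * r ^ δ) '' Ioc (0:ℝ) ρ, ENNReal.ofReal (φ u / u) =
      ∫⁻ r in Ioc (0:ℝ) ρ, ENNReal.ofReal |K * (δ * r ^ (δ - 1))| *
        ENNReal.ofReal (φ (K * r ^ δ) / (K * r ^ δ)) := by
    simpa only [ContinuousLinearMap.det_toSpanSingleton] using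
      lintegral_image_eq_lintegral_abs_det_fderiv_mul volume hmeas
        (fun r hr => (hderiv r hr).hasFDerivWithinAt) hinj (fun u => ENNReal.ofReal (φ u / u))
  have himg : (fun r : ℝ => K * r ^ δ) '' Ioc (0:ℝ) ρ ⊆ Ioc (0:ℝ) (K * ρ ^ δ) := by
    rintro _ ⟨r, hr, rfl⟩
    exact ⟨mul_pos hK (Real.rpow_pos_of_pos hr.1 δ),
      mul_le_mul_of_nonneg_left (Real.rpow_le_rpow hr.1.le hr.2 hδ0.le) hK.le⟩
  calc ∫⁻ r in Ioc (0:ℝ) ρ, ENNReal.ofReal (φ (K * r ^ δ) / r)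
      = ∫⁻ r in Ioc (0:ℝ) ρ, ENNReal.ofReal (1/δ) * (ENNReal.ofReal |K * (δ * r ^ (δ - 1))| *
          ENNReal.ofReal (φ (K * r ^ δ) / (K * r ^ δ))) := by
        refine setLIntegral_congr_fun hmeas (fun r hr => ?_)
        have hr0 : (0:ℝ) < r := hr.1
        have hu : (0:ℝ) < r ^ δ := Real.rpow_pos_of_pos hr0 δ
        have hf'pos : (0:ℝ) < K * (δ * r ^ (δ - 1)) :=
          mul_pos hK (mul_pos hδ0 (Real.rpow_pos_of_pos hr0 _))
        rw [abs_of_pos hf'pos, ← ENNReal.ofReal_mul hf'pos.le,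
          ← ENNReal.ofReal_mul (by positivity)]
        congr 1
        have hv : r ^ (δ - 1) = r ^ δ / r := by
          rw [Real.rpow_sub hr0, Real.rpow_one]
        rw [hv]
        field_simp
    _ = ENNReal.ofReal (1/δ) * ∫⁻ r in Ioc (0:ℝ) ρ, ENNReal.ofReal |K * (δ * r ^ (δ - 1))| *
          ENNReal.ofReal (φ (K * r ^ δ) / (K * r ^ δ)) :=
        lintegral_const_mul' _ _ ENNReal.ofReal_ne_top
    _ = ENNReal.ofReal (1/δ) *
          ∫⁻ u in (fun r : ℝ => K * r ^ δ) '' Ioc (0:ℝ) ρ, ENNReal.ofReal (φ u / u) := by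
        rw [key]
    _ ≤ _ := mul_le_mul_right (lintegral_mono_set himg) _

lemma diniSeminormPt_mono {σ₁ σ₂ : ℝ} (h : σ₁ ≤ σ₂) :
    diniSeminormPt s g σ₁ ≤ diniSeminormPt s g σ₂ :=
  iSup_mono fun x => lintegral_mono_set (Ioc_subset_Ioc_right h)

end AuxEuler

/-- The 2-D vorticity transport bound: if the vorticity is transported as
`ζ(t,x) = ζ₀(U(0,t,x))` by surjective streamline maps which are Hölder of exponent
`δ(t) = e^{−c₁ B t}` and constant `K`, and `⟨ζ₀⟩_* < ∞`, then for `t ∈ [0,T]` one has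
`⟨ζ(t)⟩_* ≤ (1/δ)·⟨ζ₀⟩_{*,K ρ^δ}`, `‖ζ(t)‖_∞ = ‖ζ₀‖_∞` and
`‖|ζ(t)‖|_* ≤ C_T ‖|ζ₀‖|_*`. -/
theorem euler_vorticity_dini_bound
    (s : Set (EuclideanSpace ℝ (Fin 2))) (hs : IsCompact s) (hne : s.Nonempty)
    (ζ₀ : EuclideanSpace ℝ (Fin 2) → ℝ) (hζ₀ : ContinuousOn ζ₀ s)
    (T K c₁ B ρ : ℝ) (hT : 0 < T) (hK : 1 ≤ K) (hc₁ : 0 < c₁) (hρ : 0 < ρ)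
    (hB : B = supNormOn s ζ₀)
    (hfin : diniSeminormPt s ζ₀ ρ < ⊤)
    (U : ℝ → EuclideanSpace ℝ (Fin 2) → EuclideanSpace ℝ (Fin 2))
    (hUmaps : ∀ t ∈ Icc (0 : ℝ) T, MapsTo (U t) s s)
    (hUsurj : ∀ t ∈ Icc (0 : ℝ) T, SurjOn (U t) s s)
    (hUhold : ∀ t ∈ Icc (0 : ℝ) T, ∀ x ∈ s, ∀ y ∈ s,
      dist (U t x) (U t y) ≤ K * dist x y ^ Real.exp (-(c₁ * B * t))) :
    ∃ C_T : ℝ, 0 < C_T ∧ ∀ t ∈ Icc (0 : ℝ) T,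
      (diniSeminormPt s (ζ₀ ∘ U t) ρ ≤
        ENNReal.ofReal (1 / Real.exp (-(c₁ * B * t))) *
          diniSeminormPt s ζ₀ (K * ρ ^ Real.exp (-(c₁ * B * t)))) ∧
      supNormOn s (ζ₀ ∘ U t) = supNormOn s ζ₀ ∧
      diniSeminormPt s (ζ₀ ∘ U t) ρ + ENNReal.ofReal (supNormOn s (ζ₀ ∘ U t)) ≤
        ENNReal.ofReal C_T * (diniSeminormPt s ζ₀ ρ + ENNReal.ofReal (supNormOn s ζ₀)) := by
  obtain ⟨x₀, hx₀⟩ := hne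
  have hK0 : (0:ℝ) < K := lt_of_lt_of_le one_pos hK
  set B' := supNormOn s ζ₀ with hB'
  -- boundedness of ζ₀ on s
  have hbddim : BddAbove ((fun x => |ζ₀ x|) '' s) := (hs.image_of_continuousOn hζ₀.abs).bddAbove
  have hsetim : {d | ∃ x ∈ s, d = |ζ₀ x|} = (fun x => |ζ₀ x|) '' s := by
    ext d; simp [eq_comm]
  have hbd : ∀ z ∈ s, |ζ₀ z| ≤ B' := by
    intro z hz
    rw [hB', supNormOn, hsetim]
    exact le_csSup hbddim ⟨z, hz, rfl⟩
  have hB'0 : (0:ℝ) ≤ B' := le_trans (abs_nonneg _) (hbd x₀ hx₀)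
  have hB0 : (0:ℝ) ≤ B := hB ▸ hB'0
  -- constants
  set σ₂ : ℝ := K * max ρ 1 with hσ₂def
  have hmax0 : (0:ℝ) < max ρ 1 := lt_max_of_lt_right one_pos
  have hσ₂ρ : ρ ≤ σ₂ := by
    have h1 : ρ ≤ max ρ 1 := le_max_left _ _
    nlinarith
  set c₂ : ℝ := 2 * (σ₂ - ρ) / ρ with hc₂def
  have hc₂0 : (0:ℝ) ≤ c₂ := by
    apply div_nonneg _ hρ.le; linarith
  refine ⟨Real.exp (c₁ * B * T) * (1 + c₂) + 1, ?_, ?_⟩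
  · nlinarith [Real.exp_pos (c₁ * B * T)]
  intro t ht
  set δ : ℝ := Real.exp (-(c₁ * B * t)) with hδdef
  have hδ0 : (0:ℝ) < δ := Real.exp_pos _
  have hδ1 : δ ≤ 1 := Real.exp_le_one_iff.mpr
    (neg_nonpos.mpr (mul_nonneg (mul_nonneg hc₁.le hB0) ht.1))
  have hmapsto := hUmaps t ht
  -- composed function is bounded by B'
  have hbdc : ∀ z ∈ s, |(ζ₀ ∘ U t) z| ≤ B' := fun z hz => hbd _ (hmapsto hz)
  -- modulus comparison
  have hmod : ∀ x ∈ s, ∀ r : ℝ, 0 ≤ r →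
      modulusPtOn s (ζ₀ ∘ U t) x r ≤ modulusPtOn s ζ₀ (U t x) (K * r ^ δ) := by
    intro x hx r hr
    have hKr : (0:ℝ) ≤ K * r ^ δ := by positivity
    refine Real.sSup_le ?_ (modulusPtOn_nonneg hbd (hmapsto hx) hKr)
    rintro d ⟨y, hy, hdist, rfl⟩
    refine le_csSup (modSet_bddAbove hbd (hmapsto hx) _) ⟨U t y, hmapsto hy, ?_, rfl⟩
    calc dist (U t x) (U t y) ≤ K * dist x y ^ δ := hUhold t ht x hx y hy
      _ ≤ K * r ^ δ := mul_le_mul_of_nonneg_left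
          (Real.rpow_le_rpow dist_nonneg hdist hδ0.le) hK0.le
  -- sup norm equality
  have hsup : supNormOn s (ζ₀ ∘ U t) = supNormOn s ζ₀ := by
    unfold supNormOn
    congr 1
    ext d
    constructor
    · rintro ⟨x, hx, rfl⟩
      exact ⟨U t x, hmapsto hx, rfl⟩
    · rintro ⟨y, hy, rfl⟩
      obtain ⟨x, hx, rfl⟩ := hUsurj t ht hy
      exact ⟨x, hx, rfl⟩
  -- main Dini bound
  have hmain : diniSeminormPt s (ζ₀ ∘ U t) ρ ≤
      ENNReal.ofReal (1 / δ) * diniSeminormPt s ζ₀ (K * ρ ^ δ) := by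
    rw [diniSeminormPt]
    apply iSup_le
    rintro ⟨x, hx⟩
    calc ∫⁻ r in Ioc (0:ℝ) ρ, ENNReal.ofReal (modulusPtOn s (ζ₀ ∘ U t) x r / r)
        ≤ ∫⁻ r in Ioc (0:ℝ) ρ,
            ENNReal.ofReal (modulusPtOn s ζ₀ (U t x) (K * r ^ δ) / r) := by
          refine setLIntegral_mono' measurableSet_Ioc fun r hr => ?_
          exact ENNReal.ofReal_le_ofReal
            ((div_le_div_iff_of_pos_right hr.1).mpr (hmod x hx r hr.1.le))
      _ ≤ ENNReal.ofReal (1 / δ) *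
            ∫⁻ u in Ioc (0:ℝ) (K * ρ ^ δ), ENNReal.ofReal (modulusPtOn s ζ₀ (U t x) u / u) :=
          cov_aux _ hK0 hδ0
      _ ≤ ENNReal.ofReal (1 / δ) * diniSeminormPt s ζ₀ (K * ρ ^ δ) := by
          refine mul_le_mul_right ?_ _
          exact le_iSup (fun y : s =>
            ∫⁻ u in Ioc (0:ℝ) (K * ρ ^ δ), ENNReal.ofReal (modulusPtOn s ζ₀ y u / u))
            ⟨U t x, hmapsto hx⟩
  refine ⟨hmain, hsup, ?_⟩
  -- σ-comparison: K * ρ ^ δ ≤ σ₂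
  have hσδ : K * ρ ^ δ ≤ σ₂ := by
    refine mul_le_mul_of_nonneg_left ?_ hK0.le
    rcases le_total ρ 1 with h1 | h1
    · exact le_trans (Real.rpow_le_one hρ.le h1 hδ0.le) (le_max_right _ _)
    · calc ρ ^ δ ≤ ρ ^ (1:ℝ) := Real.rpow_le_rpow_of_exponent_le h1 hδ1
        _ = ρ := Real.rpow_one ρ
        _ ≤ max ρ 1 := le_max_left _ _
  -- tail bound
  have htail : diniSeminormPt s ζ₀ σ₂ ≤
      diniSeminormPt s ζ₀ ρ + ENNReal.ofReal (2 * B' / ρ) * ENNReal.ofReal (σ₂ - ρ) := by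
    rw [diniSeminormPt]
    apply iSup_le
    rintro ⟨x, hx⟩
    have hsplit : Ioc (0:ℝ) σ₂ ⊆ Ioc (0:ℝ) ρ ∪ Ioc ρ σ₂ := by
      rw [Ioc_union_Ioc_eq_Ioc hρ.le hσ₂ρ]
    calc ∫⁻ r in Ioc (0:ℝ) σ₂, ENNReal.ofReal (modulusPtOn s ζ₀ x r / r)
        ≤ ∫⁻ r in Ioc (0:ℝ) ρ ∪ Ioc ρ σ₂, ENNReal.ofReal (modulusPtOn s ζ₀ x r / r) :=
          lintegral_mono_set hsplit
      _ ≤ (∫⁻ r in Ioc (0:ℝ) ρ, ENNReal.ofReal (modulusPtOn s ζ₀ x r / r)) +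
            ∫⁻ r in Ioc ρ σ₂, ENNReal.ofReal (modulusPtOn s ζ₀ x r / r) :=
          lintegral_union_le _ _ _
      _ ≤ diniSeminormPt s ζ₀ ρ + ENNReal.ofReal (2 * B' / ρ) * ENNReal.ofReal (σ₂ - ρ) := by
          refine add_le_add ?_ ?_
          · exact le_iSup (fun y : s =>
              ∫⁻ r in Ioc (0:ℝ) ρ, ENNReal.ofReal (modulusPtOn s ζ₀ y r / r)) ⟨x, hx⟩
          · calc ∫⁻ r in Ioc ρ σ₂, ENNReal.ofReal (modulusPtOn s ζ₀ x r / r)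
                ≤ ∫⁻ _ in Ioc ρ σ₂, ENNReal.ofReal (2 * B' / ρ) := by
                  refine setLIntegral_mono' measurableSet_Ioc fun r hr => ?_
                  exact ENNReal.ofReal_le_ofReal
                    (div_le_div₀ (by linarith) (modulusPtOn_le hbd hx hB'0 r) hρ hr.1.le)
              _ = ENNReal.ofReal (2 * B' / ρ) * ENNReal.ofReal (σ₂ - ρ) := by
                  rw [setLIntegral_const, Real.volume_Ioc]
  -- assemble
  rw [hsup]
  set D := diniSeminormPt s ζ₀ ρ with hD
  set N := ENNReal.ofReal B' with hN
  have hchain : diniSeminormPt s (ζ₀ ∘ U t) ρ ≤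
      ENNReal.ofReal (Real.exp (c₁ * B * T)) * (D + ENNReal.ofReal c₂ * N) := by
    calc diniSeminormPt s (ζ₀ ∘ U t) ρ
        ≤ ENNReal.ofReal (1 / δ) * diniSeminormPt s ζ₀ (K * ρ ^ δ) := hmain
      _ ≤ ENNReal.ofReal (Real.exp (c₁ * B * T)) * diniSeminormPt s ζ₀ σ₂ := by
          refine mul_le_mul' (ENNReal.ofReal_le_ofReal ?_) (diniSeminormPt_mono hσδ)
          rw [hδdef, one_div, ← Real.exp_neg, neg_neg]
          exact Real.exp_le_exp.mpr (mul_le_mul_of_nonneg_left ht.2 (mul_nonneg hc₁.le hB0))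
      _ ≤ ENNReal.ofReal (Real.exp (c₁ * B * T)) * (D + ENNReal.ofReal c₂ * N) := by
          refine mul_le_mul_right (htail.trans ?_) _
          refine add_le_add_right ?_ _
          rw [hN, ← ENNReal.ofReal_mul (div_nonneg (by linarith) hρ.le),
            show (2 * B' / ρ) * (σ₂ - ρ) = c₂ * B' by rw [hc₂def]; field_simp,
            ENNReal.ofReal_mul hc₂0]
  calc diniSeminormPt s (ζ₀ ∘ U t) ρ + N
      ≤ ENNReal.ofReal (Real.exp (c₁ * B * T)) * (D + ENNReal.ofReal c₂ * N) + N :=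
        add_le_add_left hchain N
    _ ≤ ENNReal.ofReal (Real.exp (c₁ * B * T)) *
          ((D + N) + ENNReal.ofReal c₂ * (D + N)) + (D + N) :=
        add_le_add (mul_le_mul_right
          (add_le_add le_self_add (mul_le_mul_right le_add_self _)) _) le_add_self
    _ = (ENNReal.ofReal (Real.exp (c₁ * B * T)) * (1 + ENNReal.ofReal c₂) + 1) * (D + N) := by
        ring
    _ = ENNReal.ofReal (Real.exp (c₁ * B * T) * (1 + c₂) + 1) * (D + N) := by
        rw [ENNReal.ofReal_add (mul_nonneg (Real.exp_pos _).le (by linarith)) zero_le_one,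
          ENNReal.ofReal_one, ENNReal.ofReal_mul (Real.exp_pos _).le,
          ENNReal.ofReal_add zero_le_one hc₂0, ENNReal.ofReal_one]
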